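/- Every graph G without isolated edges can be decomposed into two edge-disjoint subgraphs H and F such that H is either empty or has minimum degree at least 10^10, and F contains no isolated edges and has degeneracy strictly less than 10^10 + 10^8. -/

import Mathlib

open Classical in
/-- Degree of `v` in `G` (classical, so usable for arbitrary subgraphs). -/
noncomputable def deg {V : Type*} [Fintype V] (G : SimpleGraph V) (v : V) : ℕ :=
  G.degree v

open Classical in
/-- Weighted degree (sum) of `v` under edge weighting `w`. -/
noncomputable def wdeg {V : Type*} [Fintype V] (G : SimpleGraph V) (w : Sym2 V → ℕ) (v : V) : ℕ :=
  ∑ e ∈ G.incidenceFinset v, w e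

/-- `G` has no `K₂`-component: every edge is adjacent to some other edge. -/
def NoIsolatedEdge {V : Type*} (G : SimpleGraph V) : Prop :=
  ∀ u v, G.Adj u v → ∃ x, (G.Adj u x ∧ x ≠ v) ∨ (G.Adj v x ∧ x ≠ u)

/-- `G` admits a neighbour-sum-distinguishing edge weighting with weights in {1,2,3}. -/
def Fulfills123 {V : Type*} [Fintype V] (G : SimpleGraph V) : Prop :=
  ∃ w : Sym2 V → ℕ, (∀ e ∈ G.edgeSet, w e = 1 ∨ w e = 2 ∨ w e = 3) ∧
    ∀ u v, G.Adj u v → wdeg G w u ≠ wdeg G w v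

/-- `F` has degeneracy less than `k`: every nonempty vertex subset contains a
vertex with fewer than `k` neighbours inside it. -/
def DegenLT {V : Type*} (F : SimpleGraph V) (k : ℕ) : Prop :=
  ∀ S : Set V, S.Nonempty → ∃ v ∈ S, (F.neighborSet v ∩ S).ncard < k

section Aux

open Classical Finset

variable {V : Type*} [Fintype V]

private noncomputable def nbs (G : SimpleGraph V) (v : V) : Finset V :=
  Finset.univ.filter (fun u => G.Adj v u)

private lemma mem_nbs {G : SimpleGraph V} {v u : V} : u ∈ nbs G v ↔ G.Adj v u := by
  simp [nbs]

private lemma deg_eq (G : SimpleGraph V) (v : V) : deg G v = (nbs G v).card := by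
  unfold deg SimpleGraph.degree
  congr 1
  ext u
  simp [nbs, SimpleGraph.mem_neighborFinset]

private lemma nbs_mono {H H' : SimpleGraph V} (h : H ≤ H') (v : V) :
    nbs H v ⊆ nbs H' v := by
  intro u hu
  rw [mem_nbs] at *
  exact h hu

private noncomputable def ecard (H : SimpleGraph V) : ℕ :=
  (Finset.univ.filter (fun e : Sym2 V => e ∈ H.edgeSet)).card

private lemma ecard_lt {H H' : SimpleGraph V} (hle : H ≤ H') {u v : V}
    (h1 : H'.Adj u v) (h2 : ¬ H.Adj u v) : ecard H < ecard H' := by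
  apply Finset.card_lt_card
  have hsub : (Finset.univ.filter (fun e : Sym2 V => e ∈ H.edgeSet)) ⊆
      (Finset.univ.filter (fun e : Sym2 V => e ∈ H'.edgeSet)) := by
    intro e he
    simp only [Finset.mem_filter, Finset.mem_univ, true_and] at he ⊢
    exact SimpleGraph.edgeSet_mono hle he
  rw [Finset.ssubset_iff_of_subset hsub]
  exact ⟨s(u,v), by simp [SimpleGraph.mem_edgeSet, h1], by simp [SimpleGraph.mem_edgeSet, h2]⟩

private def Good (G H : SimpleGraph V) : Prop :=
  H ≤ G ∧ (∀ v, deg H v ≠ 0 → 10 ^ 10 ≤ deg H v) ∧ NoIsolatedEdge (G \ H)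

private lemma improve (G H : SimpleGraph V) (hHG : H ≤ G)
    (hP : ∀ v, deg H v ≠ 0 → 10 ^ 10 ≤ deg H v)
    (hF : NoIsolatedEdge (G \ H))
    (S : Set V) (hS : S.Nonempty)
    (hbig : ∀ v ∈ S, 10 ^ 10 + 10 ^ 8 ≤ ((G \ H).neighborSet v ∩ S).ncard) :
    ∃ H' : SimpleGraph V, Good G H' ∧ ecard H < ecard H' := by
  classical
  set F := G \ H with hFdef
  have hFadj : ∀ {u v : V}, F.Adj u v ↔ G.Adj u v ∧ ¬ H.Adj u v := by
    intro u v
    rw [hFdef]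
    exact SimpleGraph.sdiff_adj G H u v
  set Nb : V → Finset V := fun v => (nbs F v).filter (fun u => u ∈ S) with hNbdef
  have mem_Nb : ∀ {v u : V}, u ∈ Nb v ↔ F.Adj v u ∧ u ∈ S := by
    intro v u
    rw [hNbdef]
    simp [mem_nbs]
  have hK : ∀ v ∈ S, 10 ^ 10 + 10 ^ 8 ≤ (Nb v).card := by
    intro v hv
    have h1 : F.neighborSet v ∩ S = ↑(Nb v) := by
      ext x
      constructor
      · rintro ⟨h1, h2⟩
        exact Finset.mem_coe.mpr (mem_Nb.mpr ⟨h1, h2⟩)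
      · intro hx
        have := mem_Nb.mp (Finset.mem_coe.mp hx)
        exact ⟨this.1, this.2⟩
    have h2 := hbig v hv
    rwa [h1, Set.ncard_coe_finset] at h2
  set c : V → ℕ := fun x => (Nb x).card - (10 ^ 10 + 1) with hcdef
  have hcv : ∀ v : V, c v = (Nb v).card - (10 ^ 10 + 1) := fun v => rfl
  have hcsum : ∀ v ∈ S, c v + (10 ^ 10 + 1) = (Nb v).card := by
    intro v hv
    have h1 := hK v hv
    have h2 := hcv v
    omega
  set A0 : Finset V := Finset.univ.filter
      (fun a => a ∈ S ∧ ∃ y, F.Adj a y ∧ y ∉ S ∧ deg F y = 1) with hA0def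
  have mem_A0 : ∀ {a : V}, a ∈ A0 ↔ a ∈ S ∧ ∃ y, F.Adj a y ∧ y ∉ S ∧ deg F y = 1 := by
    intro a
    rw [hA0def]
    simp
  set blow : V → Finset (V × ℕ) := fun x => ({x} : Finset V) ×ˢ Finset.range (c x) with hblowdef
  have blow_card : ∀ x, (blow x).card = c x := by
    intro x
    rw [hblowdef]
    simp
  have mem_blow : ∀ {x : V} {p : V × ℕ}, p ∈ blow x ↔ p.1 = x ∧ p.2 < c x := by
    intro x p
    obtain ⟨p1, p2⟩ := p
    rw [hblowdef]
    simp only [Finset.mem_product, Finset.mem_singleton, Finset.mem_range]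
  have blow_disj : ∀ x y : V, x ≠ y → Disjoint (blow x) (blow y) := by
    intro x y hxy
    rw [Finset.disjoint_left]
    intro p hp hq
    exact hxy ((mem_blow.mp hp).1.symm.trans (mem_blow.mp hq).1)
  have hall : ∀ A : Finset {a : V // a ∈ A0},
      A.card ≤ (A.biUnion (fun a => (Nb ↑a).biUnion blow)).card := by
    intro A
    set N : Finset V := A.biUnion (fun a => Nb ↑a) with hNdef
    have hNS : ∀ x ∈ N, x ∈ S := by
      intro x hx
      rw [hNdef] at hx
      obtain ⟨a, _, hxa⟩ := Finset.mem_biUnion.mp hx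
      exact (mem_Nb.mp hxa).2
    have hUnion : A.biUnion (fun a => (Nb ↑a).biUnion blow) = N.biUnion blow := by
      ext p
      simp only [hNdef, Finset.mem_biUnion]
      constructor
      · rintro ⟨a, ha, x, hx, hp⟩
        exact ⟨x, ⟨a, ha, hx⟩, hp⟩
      · rintro ⟨x, ⟨a, ha, hx⟩, hp⟩
        exact ⟨a, ha, x, hx, hp⟩
    rw [hUnion, Finset.card_biUnion (fun x _ y _ h => blow_disj x y h)]
    have hsum_blow : ∑ x ∈ N, (blow x).card = ∑ x ∈ N, c x :=
      Finset.sum_congr rfl (fun x _ => blow_card x)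
    rw [hsum_blow]
    have hsub : ∀ a ∈ A, Nb (↑a : V) ⊆ N := by
      intro a ha
      rw [hNdef]
      exact Finset.subset_biUnion_of_mem (fun a : {a : V // a ∈ A0} => Nb (↑a : V)) ha
    have step1 : ∀ a ∈ A, (Nb (↑a : V)).card = (N.filter (fun x => x ∈ Nb ↑a)).card := by
      intro a ha
      congr 1
      ext x
      simp only [Finset.mem_filter]
      exact ⟨fun h => ⟨hsub a ha h, h⟩, fun h => h.2⟩
    have swap : ∑ a ∈ A, (Nb (↑a : V)).card
        = ∑ x ∈ N, (A.filter (fun a : {a : V // a ∈ A0} => x ∈ Nb ↑a)).card := by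
      calc ∑ a ∈ A, (Nb (↑a : V)).card
          = ∑ a ∈ A, ∑ x ∈ N, (if x ∈ Nb (↑a : V) then 1 else 0) := by
            refine Finset.sum_congr rfl (fun a ha => ?_)
            rw [step1 a ha, Finset.card_filter]
        _ = ∑ x ∈ N, ∑ a ∈ A, (if x ∈ Nb (↑a : V) then 1 else 0) := Finset.sum_comm
        _ = ∑ x ∈ N, (A.filter (fun a : {a : V // a ∈ A0} => x ∈ Nb ↑a)).card := by
            refine Finset.sum_congr rfl (fun x _ => ?_)
            rw [Finset.card_filter]
    have bnd : ∀ x ∈ N, (A.filter (fun a : {a : V // a ∈ A0} => x ∈ Nb ↑a)).card ≤ (Nb x).card := by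
      intro x hx
      apply Finset.card_le_card_of_injOn (fun a : {a : V // a ∈ A0} => (a : V))
      · intro a ha
        rw [Finset.mem_coe, Finset.mem_filter] at ha
        have h2 := mem_Nb.mp ha.2
        exact mem_Nb.mpr ⟨h2.1.symm, (mem_A0.mp a.2).1⟩
      · intro a _ b _ hab
        exact Subtype.ext hab
    have B1 : (10 ^ 10 + 10 ^ 8) * A.card ≤ ∑ a ∈ A, (Nb (↑a : V)).card := by
      calc (10 ^ 10 + 10 ^ 8) * A.card = A.card • (10 ^ 10 + 10 ^ 8) := by
            rw [smul_eq_mul, mul_comm]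
        _ ≤ ∑ a ∈ A, (Nb (↑a : V)).card :=
            Finset.card_nsmul_le_sum A _ _ (fun a _ => hK _ (mem_A0.mp a.2).1)
    have B2 : ∑ x ∈ N, (Nb x).card = (∑ x ∈ N, c x) + (10 ^ 10 + 1) * N.card := by
      calc ∑ x ∈ N, (Nb x).card = ∑ x ∈ N, (c x + (10 ^ 10 + 1)) :=
            Finset.sum_congr rfl (fun x hx => (hcsum x (hNS x hx)).symm)
        _ = (∑ x ∈ N, c x) + (10 ^ 10 + 1) * N.card := by
            rw [Finset.sum_add_distrib, Finset.sum_const, smul_eq_mul, mul_comm]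
    have B3 : (10 ^ 8 - 1) * N.card ≤ ∑ x ∈ N, c x := by
      calc (10 ^ 8 - 1) * N.card = N.card • (10 ^ 8 - 1) := by rw [smul_eq_mul, mul_comm]
        _ ≤ ∑ x ∈ N, c x := Finset.card_nsmul_le_sum _ _ _ (fun x hx => by
            have h1 := hK x (hNS x hx)
            have h2 := hcv x
            omega)
    have chain : (10 ^ 10 + 10 ^ 8) * A.card ≤ (∑ x ∈ N, c x) + (10 ^ 10 + 1) * N.card := by
      calc (10 ^ 10 + 10 ^ 8) * A.card ≤ ∑ a ∈ A, (Nb (↑a : V)).card := B1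
        _ = ∑ x ∈ N, (A.filter (fun a : {a : V // a ∈ A0} => x ∈ Nb ↑a)).card := swap
        _ ≤ ∑ x ∈ N, (Nb x).card := Finset.sum_le_sum bnd
        _ = _ := B2
    rcases le_or_gt A.card N.card with h | h
    · have h9 : N.card ≤ (10 ^ 8 - 1) * N.card := Nat.le_mul_of_pos_left _ (by norm_num)
      omega
    · have h4 : (10 ^ 10 + 1) * N.card ≤ (10 ^ 10 + 1) * A.card :=
        Nat.mul_le_mul_left _ (le_of_lt h)
      omega
  obtain ⟨f, hfinj, hft⟩ := (Finset.all_card_le_biUnion_card_iff_exists_injective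
      (fun a : {a : V // a ∈ A0} => (Nb ↑a).biUnion blow)).mp hall
  set cm : {a : V // a ∈ A0} → V := fun a => (f a).1 with hcmdef
  have hcm : ∀ a : {a : V // a ∈ A0}, cm a ∈ Nb ↑a ∧ (f a).2 < c (cm a) := by
    intro a
    obtain ⟨x, hx, hp⟩ := Finset.mem_biUnion.mp (hft a)
    obtain ⟨h1, h2⟩ := mem_blow.mp hp
    have hcma : cm a = x := h1
    constructor
    · rw [hcma]; exact hx
    · rw [hcma]; exact h2
  have mult : ∀ x : V, ((Finset.univ : Finset {a : V // a ∈ A0}).filter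
      (fun a => cm a = x)).card ≤ c x := by
    intro x
    rw [← Finset.card_range (c x)]
    apply Finset.card_le_card_of_injOn (fun a => (f a).2)
    · intro a ha
      rw [Finset.mem_coe, Finset.mem_filter] at ha
      rw [Finset.mem_coe, Finset.mem_range, ← ha.2]
      exact (hcm a).2
    · intro a ha b hb hab
      simp only [Finset.coe_filter, Set.mem_setOf_eq] at ha hb
      apply hfinj
      apply Prod.ext
      · show (f a).1 = (f b).1
        exact (ha.2.trans hb.2.symm : cm a = cm b)
      · exact hab
  set kept : Sym2 V → Prop := fun e => ∃ a : {a : V // a ∈ A0}, e = s(↑a, cm a) with hkeptdef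
  set Tg : SimpleGraph V :=
    { Adj := fun u v => F.Adj u v ∧ u ∈ S ∧ v ∈ S ∧ ¬ kept s(u, v)
      symm := ⟨by
        rintro u v ⟨h1, h2, h3, h4⟩
        refine ⟨h1.symm, h3, h2, ?_⟩
        rwa [Sym2.eq_swap]⟩
      loopless := ⟨fun u h => F.loopless.irrefl u h.1⟩ } with hTgdef
  have Tg_adj : ∀ {u v : V}, Tg.Adj u v ↔ F.Adj u v ∧ u ∈ S ∧ v ∈ S ∧ ¬ kept s(u, v) :=
    fun {u v} => Iff.rfl
  have hTgF : ∀ {u v : V}, Tg.Adj u v → F.Adj u v := fun h => (Tg_adj.mp h).1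
  set H' := H ⊔ Tg with hH'def
  have hTgG : Tg ≤ G := by
    intro u v h
    exact (hFadj.mp (hTgF h)).1
  have hH'G : H' ≤ G := sup_le hHG hTgG
  have F'_adj : ∀ {u v : V}, (G \ H').Adj u v ↔ F.Adj u v ∧ ¬ Tg.Adj u v := by
    intro u v
    rw [hH'def, hFdef]
    simp only [SimpleGraph.sdiff_adj, SimpleGraph.sup_adj]
    tauto
  have Tdeg : ∀ v ∈ S, 10 ^ 10 ≤ (nbs Tg v).card := by
    intro v hv
    set keptN : Finset V := (Nb v).filter (fun u => kept s(v, u)) with hkNdef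
    have hsub : Nb v \ keptN ⊆ nbs Tg v := by
      intro u hu
      rw [Finset.mem_sdiff] at hu
      have h1 := mem_Nb.mp hu.1
      rw [mem_nbs, Tg_adj]
      refine ⟨h1.1, hv, h1.2, ?_⟩
      intro hk
      exact hu.2 (Finset.mem_filter.mpr ⟨hu.1, hk⟩)
    set bad1 : Finset V := ((Finset.univ : Finset {a : V // a ∈ A0}).filter
      (fun a : {a : V // a ∈ A0} => (a : V) = v)).image cm with hb1
    set bad2 : Finset V := ((Finset.univ : Finset {a : V // a ∈ A0}).filter
      (fun a => cm a = v)).image (fun a : {a : V // a ∈ A0} => (a : V)) with hb2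
    have hkb : keptN ⊆ bad1 ∪ bad2 := by
      intro u hu
      have hk := (Finset.mem_filter.mp hu).2
      obtain ⟨a, ha⟩ := hk
      rw [Sym2.eq_iff] at ha
      rcases ha with ⟨h1, h2⟩ | ⟨h1, h2⟩
      · apply Finset.mem_union_left
        rw [hb1]
        exact Finset.mem_image.mpr ⟨a, Finset.mem_filter.mpr ⟨Finset.mem_univ _, h1.symm⟩, h2.symm⟩
      · apply Finset.mem_union_right
        rw [hb2]
        exact Finset.mem_image.mpr ⟨a, Finset.mem_filter.mpr ⟨Finset.mem_univ _, h1.symm⟩, h2.symm⟩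
    have hb1card : bad1.card ≤ 1 := by
      rw [hb1]
      apply le_trans Finset.card_image_le
      apply Finset.card_le_one.mpr
      intro a ha b hb
      exact Subtype.ext ((Finset.mem_filter.mp ha).2.trans (Finset.mem_filter.mp hb).2.symm)
    have hb2card : bad2.card ≤ c v := le_trans Finset.card_image_le (mult v)
    have hkcard : keptN.card ≤ 1 + c v := by
      have := Finset.card_union_le bad1 bad2
      have h8 := Finset.card_le_card hkb
      omega
    have h5 := Finset.le_card_sdiff keptN (Nb v)
    have h6 := hcsum v hv
    have h7 := Finset.card_le_card hsub
    omega
  refine ⟨H', ⟨hH'G, ?_, ?_⟩, ?_⟩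
  · -- min degree condition
    intro v hv
    by_cases h0 : deg H v = 0
    · have hcard : (nbs H' v).card ≠ 0 := by rwa [deg_eq] at hv
      obtain ⟨u, hu⟩ := Finset.card_pos.mp (Nat.pos_of_ne_zero hcard)
      have hadj : H'.Adj v u := mem_nbs.mp hu
      rw [hH'def, SimpleGraph.sup_adj] at hadj
      rcases hadj with hadj | hadj
      · exfalso
        have hmem : u ∈ nbs H v := mem_nbs.mpr hadj
        have hpos := Finset.card_pos.mpr ⟨u, hmem⟩
        rw [deg_eq] at h0
        omega
      · have hvS : v ∈ S := (Tg_adj.mp hadj).2.1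
        have h1 := Tdeg v hvS
        have h2 : nbs Tg v ⊆ nbs H' v := nbs_mono (le_sup_right) v
        have h3 := Finset.card_le_card h2
        rw [deg_eq]
        omega
    · have h1 := hP v h0
      have h2 : deg H v ≤ deg H' v := by
        rw [deg_eq, deg_eq]
        exact Finset.card_le_card (nbs_mono le_sup_left v)
      omega
  · -- no isolated edge in G \ H'
    have main : ∀ u v : V, (G \ H').Adj u v → u ∈ S →
        ∃ x, ((G \ H').Adj u x ∧ x ≠ v) ∨ ((G \ H').Adj v x ∧ x ≠ u) := by
      intro u v huv hu
      have hFuv : F.Adj u v := (F'_adj.mp huv).1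
      have hnT : ¬ Tg.Adj u v := (F'_adj.mp huv).2
      by_cases hv : v ∈ S
      · have hk : kept s(u, v) := by
          by_contra hnk
          exact hnT (Tg_adj.mpr ⟨hFuv, hu, hv, hnk⟩)
        obtain ⟨a, ha⟩ := hk
        obtain ⟨haS, y, hay, hyS, hydeg⟩ := mem_A0.mp a.2
        have hcmS : cm a ∈ S := (mem_Nb.mp (hcm a).1).2
        have hF'ay : (G \ H').Adj (↑a : V) y := by
          rw [F'_adj]
          refine ⟨hay, ?_⟩
          intro hT
          exact hyS (Tg_adj.mp hT).2.2.1
        rw [Sym2.eq_iff] at ha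
        rcases ha with ⟨h1, h2⟩ | ⟨h1, h2⟩
        · refine ⟨y, Or.inl ⟨?_, ?_⟩⟩
          · rw [h1]; exact hF'ay
          · intro hyv
            rw [hyv, h2] at hyS
            exact hyS hcmS
        · refine ⟨y, Or.inr ⟨?_, ?_⟩⟩
          · rw [h2]; exact hF'ay
          · intro hyu
            rw [hyu, h1] at hyS
            exact hyS hcmS
      · by_cases hd : deg F v = 1
        · have huA : u ∈ A0 := mem_A0.mpr ⟨hu, v, hFuv, hv, hd⟩
          have h1 := hcm ⟨u, huA⟩
          have hcmS : cm ⟨u, huA⟩ ∈ S := (mem_Nb.mp h1.1).2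
          have hFux : F.Adj u (cm ⟨u, huA⟩) := (mem_Nb.mp h1.1).1
          have hkept : kept s(u, cm ⟨u, huA⟩) := ⟨⟨u, huA⟩, rfl⟩
          refine ⟨cm ⟨u, huA⟩, Or.inl ⟨?_, ?_⟩⟩
          · rw [F'_adj]
            exact ⟨hFux, fun hT => (Tg_adj.mp hT).2.2.2 hkept⟩
          · intro h
            rw [← h] at hv
            exact hv hcmS
        · have h1 : 0 < (nbs F v).card := Finset.card_pos.mpr ⟨u, mem_nbs.mpr hFuv.symm⟩
          have h2 : 1 < (nbs F v).card := by
            rw [deg_eq] at hd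
            omega
          obtain ⟨x, hx, hxu⟩ := Finset.exists_mem_ne h2 u
          refine ⟨x, Or.inr ⟨?_, hxu⟩⟩
          rw [F'_adj]
          exact ⟨mem_nbs.mp hx, fun hT => hv (Tg_adj.mp hT).2.1⟩
    intro u v huv
    by_cases hu : u ∈ S
    · exact main u v huv hu
    by_cases hv : v ∈ S
    · obtain ⟨x, hx⟩ := main v u huv.symm hv
      exact ⟨x, hx.symm⟩
    · have hFuv : F.Adj u v := (F'_adj.mp huv).1
      obtain ⟨x, hx⟩ := hF u v hFuv
      rcases hx with ⟨h1, h2⟩ | ⟨h1, h2⟩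
      · exact ⟨x, Or.inl ⟨F'_adj.mpr ⟨h1, fun hT => hu (Tg_adj.mp hT).2.1⟩, h2⟩⟩
      · exact ⟨x, Or.inr ⟨F'_adj.mpr ⟨h1, fun hT => hv (Tg_adj.mp hT).2.1⟩, h2⟩⟩
  · -- strictly more edges
    obtain ⟨v0, hv0⟩ := hS
    have h1 := Tdeg v0 hv0
    have h2 : (nbs Tg v0).Nonempty := Finset.card_pos.mp (by omega)
    obtain ⟨u0, hu0⟩ := h2
    have hT : Tg.Adj v0 u0 := mem_nbs.mp hu0
    have hH'adj : H'.Adj v0 u0 := by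
      rw [hH'def, SimpleGraph.sup_adj]
      exact Or.inr hT
    exact ecard_lt le_sup_left hH'adj (hFadj.mp (hTgF hT)).2

end Aux

/-- Every graph without isolated edges decomposes into `H` (empty or of minimum
degree ≥ 10^10) and `F` (no isolated edges, degeneracy < 10^10 + 10^8). -/
theorem stmt_16 {V : Type*} [Fintype V] (G : SimpleGraph V)
    (hG : NoIsolatedEdge G) :
    ∃ H F : SimpleGraph V, Disjoint H F ∧ H ⊔ F = G ∧
      (∀ v : V, deg H v ≠ 0 → 10 ^ 10 ≤ deg H v) ∧
      NoIsolatedEdge F ∧ DegenLT F (10 ^ 10 + 10 ^ 8) := by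
  classical
  have hbot : Good G (⊥ : SimpleGraph V) := by
    refine ⟨bot_le, ?_, ?_⟩
    · intro v hv
      exfalso
      apply hv
      rw [deg_eq]
      simp [nbs]
    · rw [sdiff_bot]
      exact hG
  set ns : Set ℕ := {n | ∃ H : SimpleGraph V, Good G H ∧ ecard H = n} with hns
  have hne : ns.Nonempty := ⟨ecard ⊥, ⊥, hbot, rfl⟩
  have hbdd : BddAbove ns := by
    refine ⟨(Finset.univ : Finset (Sym2 V)).card, ?_⟩
    rintro n ⟨H, _, rfl⟩
    exact Finset.card_le_card (Finset.filter_subset _ _)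
  obtain ⟨H, hgood, hcard⟩ := Nat.sSup_mem hne hbdd
  have hmax : ∀ H' : SimpleGraph V, Good G H' → ecard H' ≤ ecard H := by
    intro H' hg
    rw [hcard]
    exact le_csSup hbdd ⟨H', hg, rfl⟩
  refine ⟨H, G \ H, disjoint_sdiff_self_right, sup_sdiff_cancel_right hgood.1,
    hgood.2.1, hgood.2.2, ?_⟩
  intro S hSne
  by_contra hno
  push_neg at hno
  obtain ⟨H', hgood', hlt⟩ := improve G H hgood.1 hgood.2.1 hgood.2.2 S hSne hno
  exact absurd (hmax H' hgood') (not_le.mpr hlt)
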